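/- Soundness of the CSP-to-MIP protocol with one-way leakage: let Ψ be a CSP over variables U and alphabet Σ in which every constraint has arity exactly k ≥ 1, and suppose every assignment satisfies at most a 2^{-(ℓ+1)}-fraction of the constraints. Consider any deterministic cheating strategy consisting of: a function answering each constraint e = (u_1,...,u_k) with a tuple a(e) ∈ Σ^k, a leakage function L : E → {0,1}^ℓ, and for each leakage value m ∈ {0,1}^ℓ an assignment B_m : U → Σ. Then the acceptance probability of the verifier — which samples a uniform constraint e, a uniform coordinate i ∈ [k], and accepts iff a(e) satisfies the relation of e and a(e)_i = B_{L(e)}(u_i) — is at most 1 − 1/(2k). -/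

import Mathlib

/-- A k-ary CSP constraint: a scope in `U^k` and a relation `R ⊆ Σ^k`. -/
structure KConstraint (U S : Type) (k : ℕ) where
  scope : Fin k → U
  rel : Set (Fin k → S)

open scoped Classical in
/-- Soundness of the CSP-to-MIP protocol with ℓ bits of one-way leakage: if every
assignment satisfies at most a `2^{-(ℓ+1)}`-fraction of the constraints, then any cheating
strategy (answer tuples `a`, leakage function `L`, and an assignment `B m` for each leakage
value `m`) is accepted with probability at most `1 - 1/(2k)`, where the verifier samples a
uniform constraint and a uniform coordinate. -/
theorem csp_to_mip_soundness {U S ι : Type} [Fintype ι] [Nonempty ι]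
    (k ℓ : ℕ) (hk : 1 ≤ k) (C : ι → KConstraint U S k)
    (hlow : ∀ A : U → S,
      (Nat.card {e : ι // (fun i => A ((C e).scope i)) ∈ (C e).rel} : ℝ)
        ≤ (Fintype.card ι : ℝ) / 2 ^ (ℓ + 1))
    (a : ι → Fin k → S) (L : ι → Fin ℓ → Bool) (B : (Fin ℓ → Bool) → U → S) :
    (∑ e : ι, ∑ i : Fin k,
        (if a e ∈ (C e).rel ∧ a e i = B (L e) ((C e).scope i) then (1 : ℝ) else 0))
      / ((Fintype.card ι : ℝ) * k)
    ≤ 1 - 1 / (2 * k) := by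
  classical
  set N := Fintype.card ι with hNdef
  have hNpos : (0 : ℝ) < N := by exact_mod_cast Fintype.card_pos
  have hkpos : (0 : ℝ) < k := by exact_mod_cast hk
  set Good : Finset ι :=
    Finset.univ.filter (fun e => (fun i => B (L e) ((C e).scope i)) ∈ (C e).rel) with hGdef
  have hGood : (Good.card : ℝ) ≤ (N : ℝ) / 2 := by
    have hsub : Good ⊆ (Finset.univ : Finset (Fin ℓ → Bool)).biUnion
        (fun m => Finset.univ.filter (fun e => (fun i => B m ((C e).scope i)) ∈ (C e).rel)) := by
      intro e he
      simp only [hGdef, Finset.mem_filter, Finset.mem_univ, true_and] at he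
      simp only [Finset.mem_biUnion, Finset.mem_filter, Finset.mem_univ, true_and]
      exact ⟨L e, he⟩
    have h1 : (Good.card : ℝ) ≤
        ∑ m : Fin ℓ → Bool, ((Finset.univ.filter
          (fun e => (fun i => B m ((C e).scope i)) ∈ (C e).rel)).card : ℝ) := by
      exact_mod_cast (Finset.card_le_card hsub).trans Finset.card_biUnion_le
    have h2 : ∀ m : Fin ℓ → Bool,
        ((Finset.univ.filter
          (fun e => (fun i => B m ((C e).scope i)) ∈ (C e).rel)).card : ℝ)
          ≤ (N : ℝ) / 2 ^ (ℓ + 1) := by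
      intro m
      have := hlow (B m)
      rwa [Nat.card_eq_fintype_card, Fintype.card_subtype] at this
    calc (Good.card : ℝ) ≤ _ := h1
      _ ≤ ∑ _m : Fin ℓ → Bool, (N : ℝ) / 2 ^ (ℓ + 1) :=
          Finset.sum_le_sum fun m _ => h2 m
      _ = (2 : ℝ) ^ ℓ * ((N : ℝ) / 2 ^ (ℓ + 1)) := by
          rw [Finset.sum_const, Finset.card_univ]
          simp [nsmul_eq_mul]
      _ = (N : ℝ) / 2 := by
          rw [pow_succ]
          field_simp
  have hinner : ∀ e : ι,
      (∑ i : Fin k,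
        (if a e ∈ (C e).rel ∧ a e i = B (L e) ((C e).scope i) then (1 : ℝ) else 0))
      ≤ (if e ∈ Good then (k : ℝ) else (k : ℝ) - 1) := by
    intro e
    by_cases hg : e ∈ Good
    · simp only [hg, if_true]
      calc (∑ i : Fin k,
            (if a e ∈ (C e).rel ∧ a e i = B (L e) ((C e).scope i) then (1 : ℝ) else 0))
          ≤ ∑ _i : Fin k, (1 : ℝ) := Finset.sum_le_sum fun i _ => by split <;> norm_num
        _ = (k : ℝ) := by simp
    · simp only [hg, if_false]
      by_cases ha : a e ∈ (C e).rel
      · have hne : a e ≠ fun i => B (L e) ((C e).scope i) := by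
          intro h
          apply hg
          simp only [hGdef, Finset.mem_filter, Finset.mem_univ, true_and]
          rw [← h]; exact ha
        obtain ⟨i₀, hi₀⟩ := Function.ne_iff.mp hne
        have hsplit : (∑ i : Fin k,
            (if a e ∈ (C e).rel ∧ a e i = B (L e) ((C e).scope i) then (1 : ℝ) else 0))
            = (if a e ∈ (C e).rel ∧ a e i₀ = B (L e) ((C e).scope i₀) then (1 : ℝ) else 0)
              + ∑ i ∈ Finset.univ.erase i₀,
                (if a e ∈ (C e).rel ∧ a e i = B (L e) ((C e).scope i) then (1 : ℝ) else 0) :=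
          (Finset.add_sum_erase _ _ (Finset.mem_univ i₀)).symm
        rw [hsplit]
        have hz : (if a e ∈ (C e).rel ∧ a e i₀ = B (L e) ((C e).scope i₀) then (1 : ℝ) else 0)
            = 0 := by
          rw [if_neg]; rintro ⟨_, h⟩; exact hi₀ h
        rw [hz, zero_add]
        calc (∑ i ∈ Finset.univ.erase i₀,
              (if a e ∈ (C e).rel ∧ a e i = B (L e) ((C e).scope i) then (1 : ℝ) else 0))
            ≤ ∑ _i ∈ Finset.univ.erase i₀, (1 : ℝ) :=
              Finset.sum_le_sum fun i _ => by split <;> norm_num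
          _ = (k : ℝ) - 1 := by
              rw [Finset.sum_const, Finset.card_erase_of_mem (Finset.mem_univ i₀)]
              simp only [Finset.card_univ, Fintype.card_fin, nsmul_eq_mul, mul_one]
              have : (1 : ℕ) ≤ k := hk
              push_cast [Nat.cast_sub this]
              ring
      · have : (∑ i : Fin k,
            (if a e ∈ (C e).rel ∧ a e i = B (L e) ((C e).scope i) then (1 : ℝ) else 0)) = 0 := by
          apply Finset.sum_eq_zero; intro i _
          rw [if_neg]; rintro ⟨h, _⟩; exact ha h
        rw [this]
        have hk1 : (1:ℝ) ≤ (k:ℝ) := by exact_mod_cast hk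
        linarith
  have htotal : (∑ e : ι, ∑ i : Fin k,
      (if a e ∈ (C e).rel ∧ a e i = B (L e) ((C e).scope i) then (1 : ℝ) else 0))
      ≤ (N : ℝ) * k - (N : ℝ) / 2 := by
    calc (∑ e : ι, ∑ i : Fin k,
          (if a e ∈ (C e).rel ∧ a e i = B (L e) ((C e).scope i) then (1 : ℝ) else 0))
        ≤ ∑ e : ι, (if e ∈ Good then (k : ℝ) else (k : ℝ) - 1) :=
          Finset.sum_le_sum fun e _ => hinner e
      _ = ∑ e : ι, (((k : ℝ) - 1) + (if e ∈ Good then (1 : ℝ) else 0)) := by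
          apply Finset.sum_congr rfl; intro e _; split <;> ring
      _ = (N : ℝ) * ((k : ℝ) - 1) + (Good.card : ℝ) := by
          rw [Finset.sum_add_distrib, Finset.sum_const, Finset.card_univ,
            Finset.sum_ite_mem, Finset.univ_inter, Finset.sum_const, nsmul_eq_mul,
            nsmul_eq_mul]
          ring
      _ ≤ (N : ℝ) * ((k : ℝ) - 1) + (N : ℝ) / 2 := by linarith
      _ ≤ (N : ℝ) * k - (N : ℝ) / 2 := by nlinarith
  rw [div_le_iff₀ (by positivity)]
  have : (1 - 1 / (2 * (k : ℝ))) * ((N : ℝ) * k) = (N : ℝ) * k - (N : ℝ) / 2 := by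
    field_simp
  rw [this]
  exact htotal
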